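/- Let 0 < q10 < q11 < 1, let q* satisfy q10 < q* < q11, let β < α be reals, and let γ ∈ ℝ. Then there exists a strictly proper scoring rule PS : ℝ × ℝ → ℝ (i.e., PS is affine in its first argument and for each p the function q ↦ PS(p, q) attains a strict global maximum at q = p) such that PS(x, q10) = β·(x − q*) + γ and PS(x, q11) = α·(x − q*) + γ for all x ∈ ℝ. Equivalently, there exists a strictly convex differentiable function r : ℝ → ℝ with r'(q10) = β, r'(q11) = α, and r(q11) − r(q10) = α·(q11 − q*) − β·(q10 − q*). -/

import Mathlib

noncomputable section

lemma hasDerivAt_posPart_sq (x : ℝ) :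
    HasDerivAt (fun y : ℝ => max y 0 ^ 2) (2 * max x 0) x := by
  rcases lt_trichotomy x 0 with hx | hx | hx
  · have h : HasDerivAt (fun _ : ℝ => (0:ℝ)) 0 x := hasDerivAt_const x 0
    have heq : (fun y : ℝ => max y 0 ^ 2) =ᶠ[nhds x] fun _ => (0:ℝ) := by
      filter_upwards [eventually_lt_nhds hx] with y hy
      simp [max_eq_right hy.le]
    rw [max_eq_right hx.le, mul_zero]
    exact h.congr_of_eventuallyEq heq
  · subst hx
    rw [max_self, mul_zero]
    rw [hasDerivAt_iff_isLittleO]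
    rw [Asymptotics.isLittleO_iff]
    intro c hc
    have h0 : ∀ᶠ y : ℝ in nhds 0, |y| < c := by
      have := Metric.ball_mem_nhds (0:ℝ) hc
      filter_upwards [this] with y hy
      simpa [Real.dist_eq] using hy
    filter_upwards [h0] with y hy
    have h1 : |max y 0| ≤ |y| := by
      rcases le_or_gt y 0 with h | h
      · simp [max_eq_right h]
      · simp [max_eq_left h.le]
    have hsq : ‖max y 0 ^ 2‖ ≤ |y| * |y| := by
      rw [sq]
      calc ‖max y 0 * max y 0‖ = |max y 0| * |max y 0| := abs_mul _ _
        _ ≤ |y| * |y| := mul_le_mul h1 h1 (abs_nonneg _) (abs_nonneg _)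
    simp only [sub_zero, smul_zero, sub_zero, max_self] at *
    calc ‖max y 0 ^ 2 - 0 ^ 2‖ = ‖max y 0 ^ 2‖ := by norm_num
      _ ≤ |y| * |y| := hsq
      _ ≤ c * ‖y‖ := mul_le_mul hy.le le_rfl (abs_nonneg _) hc.le
  · have heq : (fun y : ℝ => max y 0 ^ 2) =ᶠ[nhds x] fun y => y ^ 2 := by
      filter_upwards [eventually_gt_nhds hx] with y hy
      simp [max_eq_left hy.le]
    rw [max_eq_left hx.le]
    have h : HasDerivAt (fun y : ℝ => y ^ 2) (2 * x) x := by
      simpa using hasDerivAt_pow 2 x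
    exact h.congr_of_eventuallyEq heq

/-- **Every line-set with `β < α` comes from a strictly proper scoring rule (Lemma 5.3).**
Given `0 < q10 < q* < q11 < 1`, reals `β < α` and `γ`, there is a strictly proper scoring
rule `PS` (affine in its first argument, and for each `p` the map `q ↦ PS p q` has a
strict global maximum at `q = p`) with `PS(x, q10) = β(x − q*) + γ` and
`PS(x, q11) = α(x − q*) + γ` for all `x`; equivalently, there is a strictly convex
differentiable `r : ℝ → ℝ` with `r'(q10) = β`, `r'(q11) = α` and
`r(q11) − r(q10) = α(q11 − q*) − β(q10 − q*)`. -/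
theorem lineset_realizable_by_proper_scoring_rule (q10 q11 qs β α γ : ℝ)
    (hq10 : 0 < q10) (hcorr : q10 < q11) (hq11 : q11 < 1)
    (hqs1 : q10 < qs) (hqs2 : qs < q11) (hβα : β < α) :
    (∃ PS : ℝ → ℝ → ℝ,
      (∀ q : ℝ, ∃ a b : ℝ, ∀ p : ℝ, PS p q = a * p + b) ∧
      (∀ p q : ℝ, q ≠ p → PS p q < PS p p) ∧
      (∀ x : ℝ, PS x q10 = β * (x - qs) + γ) ∧
      (∀ x : ℝ, PS x q11 = α * (x - qs) + γ)) ∧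
    (∃ r : ℝ → ℝ, StrictConvexOn ℝ Set.univ r ∧ Differentiable ℝ r ∧
      deriv r q10 = β ∧ deriv r q11 = α ∧
      r q11 - r q10 = α * (q11 - qs) - β * (q10 - qs)) := by
  have hQ : (0:ℝ) < q11 - q10 := by linarith
  have hd1 : (0:ℝ) < qs - q10 := by linarith
  have hd2 : (0:ℝ) < q11 - qs := by linarith
  set δ := (α * (q11 - qs) + β * (qs - q10)) / (q11 - q10) with hδ
  have hβδ : β < δ := by
    rw [hδ, lt_div_iff₀ hQ]; nlinarith
  have hδα : δ < α := by
    rw [hδ, div_lt_iff₀ hQ]; nlinarith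
  set s1 := (δ - β) / (qs - q10) with hs1def
  set s2 := (α - δ) / (q11 - qs) with hs2def
  have hs1pos : 0 < s1 := div_pos (by linarith) hd1
  have hs2pos : 0 < s2 := div_pos (by linarith) hd2
  have hs1 : s1 * (qs - q10) = δ - β := div_mul_cancel₀ _ hd1.ne'
  have hs2 : s2 * (q11 - qs) = α - δ := div_mul_cancel₀ _ hd2.ne'
  set r : ℝ → ℝ :=
    fun x => δ * (x - qs) + s2/2 * (max (x - qs) 0)^2 + s1/2 * (max (qs - x) 0)^2 with hrdef
  set f' : ℝ → ℝ := fun x => δ + s2 * max (x - qs) 0 - s1 * max (qs - x) 0 with hf'def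
  have hr : ∀ x, HasDerivAt r (f' x) x := by
    intro x
    have h1 : HasDerivAt (fun y : ℝ => (max (y - qs) 0)^2) (2 * max (x - qs) 0 * 1) x :=
      by have h := (hasDerivAt_posPart_sq (x - qs)).comp x ((hasDerivAt_id x).sub_const qs); exact h
    have h2 : HasDerivAt (fun y : ℝ => (max (qs - y) 0)^2) (2 * max (qs - x) 0 * (-1)) x :=
      (hasDerivAt_posPart_sq (qs - x)).comp x ((hasDerivAt_id x).const_sub qs)
    have h0 : HasDerivAt (fun y : ℝ => δ * (y - qs)) δ x := by
      simpa using ((hasDerivAt_id x).sub_const qs).const_mul δ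
    have hsum := (h0.add (h1.const_mul (s2/2))).add (h2.const_mul (s1/2))
    refine hsum.congr_deriv ?_
    rw [hf'def]; ring
  have hderiv : deriv r = f' := funext fun x => (hr x).deriv
  have hdiff : Differentiable ℝ r := fun x => (hr x).differentiableAt
  have hmono : StrictMono f' := by
    intro a b hab
    rw [hf'def]; dsimp only
    rcases le_or_gt b qs with hb | hb
    · rw [max_eq_right (by linarith : a - qs ≤ 0), max_eq_right (by linarith : b - qs ≤ 0),
        max_eq_left (by linarith : (0:ℝ) ≤ qs - a), max_eq_left (by linarith : (0:ℝ) ≤ qs - b)]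
      nlinarith [mul_pos hs1pos (show (0:ℝ) < b - a by linarith)]
    · rcases le_or_gt qs a with ha | ha
      · rw [max_eq_left (by linarith : (0:ℝ) ≤ a - qs), max_eq_left (by linarith : (0:ℝ) ≤ b - qs),
          max_eq_right (by linarith : qs - a ≤ 0), max_eq_right (by linarith : qs - b ≤ 0)]
        nlinarith [mul_pos hs2pos (show (0:ℝ) < b - a by linarith)]
      · rw [max_eq_right (by linarith : a - qs ≤ 0), max_eq_left (by linarith : (0:ℝ) ≤ qs - a),
          max_eq_left (by linarith : (0:ℝ) ≤ b - qs), max_eq_right (by linarith : qs - b ≤ 0)]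
        nlinarith [mul_pos hs1pos (show (0:ℝ) < qs - a by linarith),
          mul_pos hs2pos (show (0:ℝ) < b - qs by linarith)]
  have hconv : StrictConvexOn ℝ Set.univ r :=
    StrictMono.strictConvexOn_univ_of_deriv hdiff.continuous (hderiv ▸ hmono)
  have hfq10 : f' q10 = β := by
    rw [hf'def]; dsimp only
    rw [max_eq_right (by linarith : q10 - qs ≤ 0), max_eq_left (by linarith : (0:ℝ) ≤ qs - q10)]
    linear_combination -hs1
  have hfq11 : f' q11 = α := by
    rw [hf'def]; dsimp only
    rw [max_eq_left (by linarith : (0:ℝ) ≤ q11 - qs), max_eq_right (by linarith : qs - q11 ≤ 0)]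
    linear_combination hs2
  have hrq10 : r q10 = δ * (q10 - qs) + s1/2 * (qs - q10)^2 := by
    rw [hrdef]; dsimp only
    rw [max_eq_right (by linarith : q10 - qs ≤ 0), max_eq_left (by linarith : (0:ℝ) ≤ qs - q10)]
    ring
  have hrq11 : r q11 = δ * (q11 - qs) + s2/2 * (q11 - qs)^2 := by
    rw [hrdef]; dsimp only
    rw [max_eq_left (by linarith : (0:ℝ) ≤ q11 - qs), max_eq_right (by linarith : qs - q11 ≤ 0)]
    ring
  have hkey : r q11 - r q10 = α * (q11 - qs) - β * (q10 - qs) := by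
    rw [hrq10, hrq11]
    have e1 : s1/2 * (qs - q10)^2 = (δ - β) * (qs - q10) / 2 := by
      rw [sq]; linear_combination ((qs - q10)/2) * hs1
    have e2 : s2/2 * (q11 - qs)^2 = (α - δ) * (q11 - qs) / 2 := by
      rw [sq]; linear_combination ((q11 - qs)/2) * hs2
    rw [e1, e2, hδ]
    field_simp
    ring
  set C := γ - β * (qs - q10) - r q10 with hC
  refine ⟨⟨fun p q => f' q * (p - q) + r q + C, ?_, ?_, ?_, ?_⟩,
    ⟨r, hconv, hdiff, by rw [hderiv]; exact hfq10, by rw [hderiv]; exact hfq11, hkey⟩⟩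
  · intro q
    exact ⟨f' q, -(f' q) * q + r q + C, fun p => by ring⟩
  · intro p q hqp
    show f' q * (p - q) + r q + C < f' p * (p - p) + r p + C
    have hz : f' p * (p - p) = 0 := by ring
    rcases lt_or_gt_of_ne hqp with h | h
    · have hs := hconv.lt_slope_of_hasDerivAt (Set.mem_univ q) (Set.mem_univ p) h (hr q)
      rw [slope_def_field] at hs
      have h2 := (lt_div_iff₀ (by linarith : (0:ℝ) < p - q)).mp hs
      linarith
    · have hs := hconv.slope_lt_of_hasDerivAt (Set.mem_univ p) (Set.mem_univ q) h (hr q)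
      rw [slope_def_field] at hs
      have h2 := (div_lt_iff₀ (by linarith : (0:ℝ) < q - p)).mp hs
      linarith
  · intro x
    show f' q10 * (x - q10) + r q10 + C = β * (x - qs) + γ
    rw [hfq10, hC]; ring
  · intro x
    show f' q11 * (x - q11) + r q11 + C = α * (x - qs) + γ
    rw [hfq11, hC]
    linear_combination hkey
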